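/- Let 0 < β ≤ γ ≤ 1. There exists a constant C depending only on β and γ such that for every t ∈ (0,1], every d ≥ 1 and every bounded continuous 2π-periodic function u₀ : ℝ → ℝ^d with finite β-Hölder seminorm ‖u₀‖_β := sup_{x≠y} ‖u₀(x)−u₀(y)‖/|x−y|^β, the function S_t u₀ given by (S_t u₀)(x) := ∫₀^{2π} p_t(x−y) u₀(y) dy satisfies sup_{x≠y∈ℝ} ‖(S_t u₀)(x) − (S_t u₀)(y)‖/|x−y|^γ ≤ C t^{−(γ−β)/2} ( ‖u₀‖_∞ + ‖u₀‖_β ). -/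

import Mathlib

open MeasureTheory

/-- The `2π`-periodic heat kernel `p_t(x) = (2πt)^{-1/2} Σ_{n∈ℤ} exp(-(x-2πn)²/(2t))`. -/
noncomputable def heatKernel (t x : ℝ) : ℝ :=
  (1 / Real.sqrt (2 * Real.pi * t)) *
    ∑' n : ℤ, Real.exp (-(x - 2 * Real.pi * n) ^ 2 / (2 * t))

/-- The periodic heat semigroup `(S_t u₀)(x) = ∫₀^{2π} p_t(x-y) u₀(y) dy`. -/
noncomputable def heatSemigroup {d : ℕ} (t : ℝ) (u₀ : ℝ → EuclideanSpace ℝ (Fin d)) (x : ℝ) :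
    EuclideanSpace ℝ (Fin d) :=
  ∫ y in (0 : ℝ)..(2 * Real.pi), heatKernel t (x - y) • u₀ y

/-- The `β`-Hölder seminorm of a function on the whole line. -/
noncomputable def holderR (β : ℝ) {E : Type*} [NormedAddCommGroup E] (v : ℝ → E) : ℝ :=
  ⨆ p : {q : ℝ × ℝ // q.1 ≠ q.2}, ‖v p.1.1 - v p.1.2‖ / |p.1.1 - p.1.2| ^ β

open MeasureTheory Real

namespace HS7

/-- The real-line Gaussian kernel. -/
noncomputable def g (t z : ℝ) : ℝ :=
  (1 / Real.sqrt (2 * Real.pi * t)) * Real.exp (-z ^ 2 / (2 * t))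

lemma g_nonneg (t z : ℝ) : 0 ≤ g t z :=
  mul_nonneg (by positivity) (Real.exp_pos _).le

lemma continuous_g (t : ℝ) : Continuous (g t) := by
  unfold g
  exact continuous_const.mul (Real.continuous_exp.comp
    (((continuous_pow 2).neg).div_const _))

lemma exp_arg_eq (t z : ℝ) : -z ^ 2 / (2 * t) = -(1 / (2 * t)) * z ^ 2 := by ring

lemma integrable_g {t : ℝ} (ht : 0 < t) : Integrable (g t) := by
  unfold g
  simp_rw [exp_arg_eq]
  exact (integrable_exp_neg_mul_sq (by positivity)).const_mul _

lemma sqrt_2pit_ne {t : ℝ} (ht : 0 < t) : Real.sqrt (2 * Real.pi * t) ≠ 0 := by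
  refine (Real.sqrt_ne_zero' ).mpr ?_
  positivity

lemma integral_g {t : ℝ} (ht : 0 < t) : ∫ z, g t z = 1 := by
  unfold g
  rw [integral_const_mul]
  simp_rw [exp_arg_eq]
  rw [integral_gaussian]
  have h : Real.pi / (1 / (2 * t)) = 2 * Real.pi * t := by
    field_simp
  rw [h, one_div, inv_mul_cancel₀ (sqrt_2pit_ne ht)]

lemma rpow_le_one_add_sq {p u : ℝ} (hp0 : 0 ≤ p) (hp2 : p ≤ 2) (hu : 0 ≤ u) :
    u ^ p ≤ 1 + u ^ 2 := by
  rcases le_total u 1 with h | h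
  · have h1 : u ^ p ≤ 1 := Real.rpow_le_one hu h hp0
    nlinarith [sq_nonneg u]
  · have h1 : u ^ p ≤ u ^ (2 : ℝ) := Real.rpow_le_rpow_of_exponent_le h hp2
    rw [show ((2:ℝ) = ((2:ℕ):ℝ)) by norm_num, Real.rpow_natCast] at h1
    linarith

/-- Key pointwise bound: `|z|^p e^{-z²/(2t)} ≤ 5 t^{p/2} e^{-z²/(4t)}` for `0 ≤ p ≤ 2`. -/
lemma key_pointwise {t : ℝ} (ht : 0 < t) {p : ℝ} (hp0 : 0 ≤ p) (hp2 : p ≤ 2) (z : ℝ) :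
    |z| ^ p * Real.exp (-z ^ 2 / (2 * t)) ≤ 5 * t ^ (p / 2) * Real.exp (-z ^ 2 / (4 * t)) := by
  have hs : 0 < Real.sqrt t := Real.sqrt_pos.mpr ht
  set u : ℝ := |z| / Real.sqrt t with hudef
  have hu0 : 0 ≤ u := div_nonneg (abs_nonneg z) hs.le
  have habs : |z| = Real.sqrt t * u := by rw [hudef]; field_simp
  have htp : (0:ℝ) ≤ t ^ (p / 2) := Real.rpow_nonneg ht.le _
  have h1 : |z| ^ p = t ^ (p / 2) * u ^ p := by
    rw [habs, Real.mul_rpow hs.le hu0]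
    congr 1
    rw [Real.sqrt_eq_rpow, ← Real.rpow_mul ht.le]
    ring_nf
  have hu2 : u ^ 2 = z ^ 2 / t := by
    rw [hudef, div_pow, sq_abs, Real.sq_sqrt ht.le]
  have hup : u ^ p ≤ 1 + z ^ 2 / t := by
    rw [← hu2]; exact rpow_le_one_add_sq hp0 hp2 hu0
  set x : ℝ := z ^ 2 / (4 * t) with hxdef
  have hx0 : 0 ≤ x := by positivity
  have hzx : z ^ 2 / t = 4 * x := by rw [hxdef]; field_simp
  have he2 : Real.exp (-z ^ 2 / (2 * t)) = Real.exp (-x) * Real.exp (-x) := by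
    rw [← Real.exp_add]; congr 1; rw [hxdef]; field_simp; ring
  have he4 : Real.exp (-z ^ 2 / (4 * t)) = Real.exp (-x) := by
    congr 1; rw [hxdef]; ring
  have h5 : (1 + 4 * x) * Real.exp (-x) ≤ 5 := by
    rw [Real.exp_neg]
    rw [mul_inv_le_iff₀ (Real.exp_pos x)]
    nlinarith [Real.add_one_le_exp x, Real.exp_pos x]
  calc |z| ^ p * Real.exp (-z ^ 2 / (2 * t))
      ≤ (t ^ (p / 2) * (1 + 4 * x)) * Real.exp (-z ^ 2 / (2 * t)) := by
        apply mul_le_mul_of_nonneg_right _ (Real.exp_pos _).le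
        rw [h1]
        apply mul_le_mul_of_nonneg_left _ htp
        rw [← hzx]; exact hup
    _ = t ^ (p / 2) * ((1 + 4 * x) * Real.exp (-x)) * Real.exp (-x) := by
        rw [he2]; ring
    _ ≤ t ^ (p / 2) * 5 * Real.exp (-x) := by
        apply mul_le_mul_of_nonneg_right _ (Real.exp_pos _).le
        exact mul_le_mul_of_nonneg_left h5 htp
    _ = 5 * t ^ (p / 2) * Real.exp (-z ^ 2 / (4 * t)) := by rw [he4]; ring


lemma aesm_moment {t p : ℝ} (hp0 : 0 ≤ p) :
    AEStronglyMeasurable (fun z : ℝ => |z| ^ p * g t z) volume :=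
  ((continuous_abs.rpow_const fun _ => Or.inr hp0).mul (continuous_g t)).aestronglyMeasurable

lemma integrable_moment {t : ℝ} (ht : 0 < t) {p : ℝ} (hp0 : 0 ≤ p) (hp2 : p ≤ 2) :
    Integrable (fun z : ℝ => |z| ^ p * g t z) := by
  have hbd : Integrable (fun z : ℝ =>
      (1 / Real.sqrt (2 * Real.pi * t)) * (5 * t ^ (p / 2)) *
        Real.exp (-(1 / (4 * t)) * z ^ 2)) :=
    (integrable_exp_neg_mul_sq (by positivity)).const_mul _
  refine hbd.mono' (aesm_moment hp0) (Filter.Eventually.of_forall fun z => ?_)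
  have h1 : ‖|z| ^ p * g t z‖ = |z| ^ p * g t z := by
    rw [Real.norm_eq_abs, abs_of_nonneg (mul_nonneg (Real.rpow_nonneg (abs_nonneg z) p)
      (g_nonneg t z))]
  rw [h1]
  unfold g
  have h2 : -(1 / (4 * t)) * z ^ 2 = -z ^ 2 / (4 * t) := by ring
  rw [h2]
  have := key_pointwise ht hp0 hp2 z
  have h3 : (0:ℝ) ≤ 1 / Real.sqrt (2 * Real.pi * t) := by positivity
  calc |z| ^ p * (1 / Real.sqrt (2 * Real.pi * t) * Real.exp (-z ^ 2 / (2 * t)))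
      = 1 / Real.sqrt (2 * Real.pi * t) * (|z| ^ p * Real.exp (-z ^ 2 / (2 * t))) := by ring
    _ ≤ 1 / Real.sqrt (2 * Real.pi * t) * (5 * t ^ (p / 2) * Real.exp (-z ^ 2 / (4 * t))) :=
        mul_le_mul_of_nonneg_left this h3
    _ = 1 / Real.sqrt (2 * Real.pi * t) * (5 * t ^ (p / 2)) * Real.exp (-z ^ 2 / (4 * t)) := by
        ring

lemma moment_le {t : ℝ} (ht : 0 < t) {p : ℝ} (hp0 : 0 ≤ p) (hp2 : p ≤ 2) :
    ∫ z, |z| ^ p * g t z ≤ 10 * t ^ (p / 2) := by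
  have htp : (0:ℝ) ≤ t ^ (p / 2) := Real.rpow_nonneg ht.le _
  have hbd : Integrable (fun z : ℝ =>
      (1 / Real.sqrt (2 * Real.pi * t)) * (5 * t ^ (p / 2)) *
        Real.exp (-(1 / (4 * t)) * z ^ 2)) :=
    (integrable_exp_neg_mul_sq (by positivity)).const_mul _
  have hmono : ∫ z, |z| ^ p * g t z ≤ ∫ z,
      (1 / Real.sqrt (2 * Real.pi * t)) * (5 * t ^ (p / 2)) *
        Real.exp (-(1 / (4 * t)) * z ^ 2) := by
    refine integral_mono (integrable_moment ht hp0 hp2) hbd fun z => ?_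
    unfold g
    have h2 : -(1 / (4 * t)) * z ^ 2 = -z ^ 2 / (4 * t) := by ring
    rw [h2]
    have := key_pointwise ht hp0 hp2 z
    have h3 : (0:ℝ) ≤ 1 / Real.sqrt (2 * Real.pi * t) := by positivity
    calc |z| ^ p * (1 / Real.sqrt (2 * Real.pi * t) * Real.exp (-z ^ 2 / (2 * t)))
        = 1 / Real.sqrt (2 * Real.pi * t) * (|z| ^ p * Real.exp (-z ^ 2 / (2 * t))) := by ring
      _ ≤ 1 / Real.sqrt (2 * Real.pi * t) * (5 * t ^ (p / 2) * Real.exp (-z ^ 2 / (4 * t))) :=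
          mul_le_mul_of_nonneg_left this h3
      _ = 1 / Real.sqrt (2 * Real.pi * t) * (5 * t ^ (p / 2)) * Real.exp (-z ^ 2 / (4 * t)) := by
          ring
  refine hmono.trans ?_
  rw [integral_const_mul, integral_gaussian]
  have h : Real.pi / (1 / (4 * t)) = 2 * (2 * Real.pi * t) := by field_simp; ring
  rw [h, Real.sqrt_mul (by norm_num : (0:ℝ) ≤ 2)]
  have hs : Real.sqrt (2 * Real.pi * t) > 0 := by
    apply Real.sqrt_pos.mpr; positivity
  have h2 : Real.sqrt 2 ≤ 2 := by
    nlinarith [Real.sq_sqrt (by norm_num : (0:ℝ) ≤ 2), Real.sqrt_nonneg 2]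
  calc 1 / Real.sqrt (2 * Real.pi * t) * (5 * t ^ (p / 2)) *
        (Real.sqrt 2 * Real.sqrt (2 * Real.pi * t))
      = 5 * Real.sqrt 2 * t ^ (p / 2) := by field_simp
    _ ≤ 10 * t ^ (p / 2) := by nlinarith [Real.sqrt_nonneg 2]

lemma hasDerivAt_g {t : ℝ} (ht : 0 < t) (z s : ℝ) :
    HasDerivAt (fun s => g t (s - z)) (-((s - z) / t) * g t (s - z)) s := by
  have h1 : HasDerivAt (fun s : ℝ => s - z) 1 s := (hasDerivAt_id s).sub_const z
  have h2 : HasDerivAt (fun s : ℝ => (s - z) ^ 2) (2 * (s - z)) s := by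
    simpa using h1.fun_pow 2
  have h3 : HasDerivAt (fun s : ℝ => -(s - z) ^ 2 / (2 * t)) (-(2 * (s - z)) / (2 * t)) s :=
    h2.neg.div_const _
  have h4 := (h3.exp).const_mul (1 / Real.sqrt (2 * Real.pi * t))
  have h5 : (fun s => 1 / Real.sqrt (2 * Real.pi * t) * Real.exp (-(s - z) ^ 2 / (2 * t))) =
      fun s => g t (s - z) := by
    funext s; unfold g; ring_nf
  rw [h5] at h4
  refine h4.congr_deriv ?_
  unfold g
  field_simp


section Generic

variable {E : Type*} [NormedAddCommGroup E] [NormedSpace ℝ E]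

/-- Integrability of a kernel times a bounded continuous function. -/
lemma integrable_smul_of_bounded {k : ℝ → ℝ} (hk : Integrable k) (hkc : Continuous k)
    {v : ℝ → E} (hv : Continuous v) {K : ℝ} (hK : ∀ w, ‖v w‖ ≤ K) :
    Integrable (fun w => k w • v w) := by
  refine ((hk.abs).mul_const K).mono' ((hkc.smul hv).aestronglyMeasurable)
    (Filter.Eventually.of_forall fun w => ?_)
  rw [norm_smul, Real.norm_eq_abs]
  exact mul_le_mul_of_nonneg_left (hK w) (abs_nonneg _)

lemma integrable_g_sub {t : ℝ} (ht : 0 < t) (s : ℝ) :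
    Integrable (fun z => g t (s - z)) := by
  exact (integrable_comp_sub_left (g t) s).mpr (integrable_g ht)

lemma continuous_g_sub {t : ℝ} (s : ℝ) : Continuous (fun z => g t (s - z)) :=
  (continuous_g t).comp (continuous_const.sub continuous_id)

/-- Summability of the Gaussian over integer translates. -/
lemma summable_gauss_nat (a : ℝ) (ha : 0 < a) (c : ℝ) :
    Summable (fun n : ℕ => Real.exp (-a * (c + n) ^ 2)) := by
  have hr : Real.exp (-a / 2) < 1 := by
    rw [Real.exp_lt_one_iff]; linarith
  refine Summable.of_nonneg_of_le (fun n => (Real.exp_pos _).le) (fun n => ?_)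
    (((summable_geometric_of_lt_one (Real.exp_pos _).le hr).mul_left (Real.exp (a * c ^ 2))))
  have h1 : -a * (c + (n:ℝ)) ^ 2 ≤ a * c ^ 2 + (-a / 2) * n := by
    have hn : ((n:ℝ))^2 ≥ (n:ℝ) := by
      have : (1:ℝ) ≤ (n:ℝ) ∨ ((n:ℝ) = 0) := by
        rcases Nat.eq_zero_or_pos n with h | h
        · right; simp [h]
        · left; exact_mod_cast h
      rcases this with h | h
      · nlinarith
      · simp [h]
    nlinarith [sq_nonneg (c + (n:ℝ)), sq_nonneg ((n:ℝ) + 2*c)]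
  calc Real.exp (-a * (c + n) ^ 2) ≤ Real.exp (a * c ^ 2 + (-a / 2) * n) := Real.exp_le_exp.mpr h1
    _ = Real.exp (a * c ^ 2) * Real.exp (-a / 2) ^ n := by
        rw [Real.exp_add]; congr 1
        rw [← Real.exp_nat_mul]; ring_nf

lemma summable_gauss_int (a : ℝ) (ha : 0 < a) (c : ℝ) :
    Summable (fun n : ℤ => Real.exp (-a * (c + n) ^ 2)) := by
  refine Summable.of_nat_of_neg ?_ ?_
  · simpa using summable_gauss_nat a ha c
  · have := summable_gauss_nat a ha (-c)
    refine this.congr fun n => ?_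
    push_cast
    ring_nf

/-- Summability of the heat-kernel terms. -/
lemma summable_heat_terms {t : ℝ} (ht : 0 < t) (w : ℝ) :
    Summable (fun n : ℤ => Real.exp (-(w - 2 * Real.pi * n) ^ 2 / (2 * t))) := by
  have hP : (0:ℝ) < 2 * Real.pi := by positivity
  have ha : 0 < (2 * Real.pi) ^ 2 / (2 * t) := by positivity
  have := (summable_gauss_int _ ha (w / (2 * Real.pi))).comp_injective neg_injective
  refine this.congr fun n => ?_
  simp only [Function.comp_apply]
  congr 1
  push_cast
  field_simp
  ring

/-- Periodization: sum of integrals over consecutive period windows equals the full integral. -/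
lemma periodize {f : ℝ → E} (hf : Integrable f) {P : ℝ} (hP : 0 < P) :
    HasSum (fun n : ℤ => ∫ w in (0:ℝ)..P, f (w + P * n)) (∫ w, f w) := by
  have hfc : Integrable (fun v : ℝ => P • f (P * v)) :=
    (hf.comp_mul_left' hP.ne').smul P
  have h := hfc.hasSum_intervalIntegral_comp_add_int
  have htot : (∫ v : ℝ, P • f (P * v)) = ∫ w, f w := by
    rw [MeasureTheory.integral_smul, MeasureTheory.Measure.integral_comp_mul_left f P,
      abs_of_pos (inv_pos.mpr hP), smul_smul, mul_inv_cancel₀ hP.ne', one_smul]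
  rw [htot] at h
  refine h.congr_fun fun n => ?_
  have key : (∫ v in (0:ℝ)..1, P • f (P * (v + n)))
      = ∫ w in (0:ℝ)..P, f (w + P * n) := by
    calc (∫ v in (0:ℝ)..1, P • f (P * (v + n)))
        = ∫ v in (0:ℝ)..1, P • (fun w => f (w + P * n)) (P * v) := by
          apply intervalIntegral.integral_congr
          intro v _
          simp [mul_add]
      _ = P • ∫ v in (0:ℝ)..1, (fun w => f (w + P * n)) (P * v) := by
          rw [intervalIntegral.integral_smul]
      _ = ∫ w in (P * 0)..(P * 1), f (w + P * n) :=
          intervalIntegral.smul_integral_comp_mul_left (f := fun w => f (w + P * n))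
            (a := 0) (b := 1) P
      _ = ∫ w in (0:ℝ)..P, f (w + P * n) := by norm_num
  exact key.symm

end Generic


section Repr

variable {d : ℕ}

lemma heatSemigroup_eq {t : ℝ} (ht : 0 < t) {u : ℝ → EuclideanSpace ℝ (Fin d)}
    (hu : Continuous u) {M : ℝ} (hM : ∀ z, ‖u z‖ ≤ M)
    (hper : ∀ y, u (y + 2 * Real.pi) = u y) (x : ℝ) :
    heatSemigroup t u x = ∫ z, g t (x - z) • u z := by
  set P : ℝ := 2 * Real.pi with hPdef
  have hP : 0 < P := by rw [hPdef]; positivity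
  have hperP : Function.Periodic u P := hper
  have hperZ : ∀ (w : ℝ) (n : ℤ), u (w + P * n) = u w := by
    intro w n
    have := (hperP.int_mul n) w
    rwa [mul_comm (n : ℝ) P] at this
  set f : ℝ → EuclideanSpace ℝ (Fin d) := fun z => g t (x - z) • u z with hfdef
  have hf : Integrable f :=
    integrable_smul_of_bounded (integrable_g_sub ht x) (continuous_g_sub x) hu hM
  set F : ℤ → ℝ → EuclideanSpace ℝ (Fin d) :=
    fun n w => g t (x - w - P * n) • u w with hFdef
  have hFc : ∀ n : ℤ, Continuous (F n) := fun n =>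
    (((continuous_g t).comp (by fun_prop)).smul hu)
  have hsum1 : HasSum (fun n : ℤ => ∫ w in (0:ℝ)..P, F n w) (∫ z, f z) := by
    refine (periodize hf hP).congr_fun fun n => ?_
    refine intervalIntegral.integral_congr fun w _ => ?_
    have harg : x - (w + P * n) = x - w - P * n := by ring
    calc F n w = g t (x - w - P * n) • u w := rfl
      _ = g t (x - (w + P * n)) • u (w + P * n) := by rw [harg, hperZ w n]
      _ = f (w + P * n) := rfl
  have hsum2 : HasSum (fun n : ℤ => ∫ w in (0:ℝ)..P, ‖F n w‖) (∫ z, g t (x - z) * ‖u z‖) := by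
    have hfn : Integrable (fun z => g t (x - z) * ‖u z‖) := by
      have := integrable_smul_of_bounded (E := ℝ) (integrable_g_sub ht x)
        (continuous_g_sub x) hu.norm (K := M) (fun w => by
          rw [Real.norm_eq_abs, abs_of_nonneg (norm_nonneg _)]; exact hM w)
      simpa [smul_eq_mul] using this
    refine (periodize hfn hP).congr_fun fun n => ?_
    refine intervalIntegral.integral_congr fun w _ => ?_
    have harg : x - (w + P * n) = x - w - P * n := by ring
    calc ‖F n w‖ = g t (x - w - P * n) * ‖u w‖ := by
          rw [hFdef]
          simp only
          rw [norm_smul, Real.norm_eq_abs, abs_of_nonneg (g_nonneg _ _)]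
      _ = g t (x - (w + P * n)) * ‖u (w + P * n)‖ := by rw [harg, hperZ w n]
  have hswap : ∫ w in Set.Ioc (0:ℝ) P, (∑' n : ℤ, F n w) = ∑' n : ℤ, ∫ w in Set.Ioc (0:ℝ) P, F n w := by
    refine (MeasureTheory.integral_tsum_of_summable_integral_norm
      (fun n => ((hFc n).integrableOn_Ioc)) ?_).symm
    refine (hsum2.summable).congr fun n => ?_
    rw [intervalIntegral.integral_of_le hP.le]
  have hker : ∀ y : ℝ, heatKernel t (x - y) • u y = ∑' n : ℤ, F n y := by
    intro y
    have hksum : Summable fun n : ℤ =>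
        (1 / Real.sqrt (2 * Real.pi * t)) * Real.exp (-(x - y - P * n) ^ 2 / (2 * t)) :=
      (summable_heat_terms ht (x - y)).mul_left _
    have h1 : heatKernel t (x - y) = ∑' n : ℤ, g t (x - y - P * n) := by
      unfold heatKernel g
      rw [← tsum_mul_left]
    have hsg : Summable fun n : ℤ => g t (x - y - P * n) := hksum
    rw [h1, ← Summable.tsum_smul_const hsg (u y)]
  calc heatSemigroup t u x
      = ∫ y in (0:ℝ)..P, heatKernel t (x - y) • u y := rfl
    _ = ∫ y in (0:ℝ)..P, (∑' n : ℤ, F n y) := by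
        refine intervalIntegral.integral_congr fun y _ => hker y
    _ = ∫ y in Set.Ioc (0:ℝ) P, (∑' n : ℤ, F n y) := intervalIntegral.integral_of_le hP.le
    _ = ∑' n : ℤ, ∫ w in Set.Ioc (0:ℝ) P, F n w := hswap
    _ = ∑' n : ℤ, ∫ w in (0:ℝ)..P, F n w := by
        refine tsum_congr fun n => ?_
        rw [intervalIntegral.integral_of_le hP.le]
    _ = ∫ z, f z := hsum1.tsum_eq

end Repr


lemma rpow_add_le_add_rpow' {p a b : ℝ} (ha : 0 ≤ a) (hb : 0 ≤ b) (hp0 : 0 ≤ p) (hp1 : p ≤ 1) :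
    (a + b) ^ p ≤ a ^ p + b ^ p := by
  have h := NNReal.rpow_add_le_add_rpow (a.toNNReal) (b.toNNReal) hp0 hp1
  have hcoe := NNReal.coe_le_coe.mpr h
  simp only [NNReal.coe_add, NNReal.coe_rpow] at hcoe
  rwa [Real.coe_toNNReal a ha, Real.coe_toNNReal b hb] at hcoe

lemma deriv_kernel_bound {t : ℝ} (ht : 0 < t) (s₀ s z : ℝ) (hs : |s - s₀| < 1) :
    |s - z| / t * g t (s - z) ≤
      1 / t * (5 * t ^ ((1:ℝ) / 2)) * (1 / Real.sqrt (2 * Real.pi * t)) *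
        Real.exp (1 / (4 * t)) * Real.exp (-(1 / (8 * t)) * (s₀ - z) ^ 2) := by
  have hA : (0:ℝ) ≤ 1 / Real.sqrt (2 * Real.pi * t) := by positivity
  have hkey := key_pointwise ht (p := 1) (by norm_num) (by norm_num) (s - z)
  rw [Real.rpow_one] at hkey
  have hsq : (s - s₀) ^ 2 ≤ 1 := by
    have h1 := abs_lt.mp hs
    nlinarith
  have h2 : (s₀ - z) ^ 2 ≤ 2 * (s - z) ^ 2 + 2 * (s - s₀) ^ 2 := by
    nlinarith [sq_nonneg ((s - z) + (s - s₀))]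
  have hexp : Real.exp (-(s - z) ^ 2 / (4 * t)) ≤
      Real.exp (1 / (4 * t)) * Real.exp (-(1 / (8 * t)) * (s₀ - z) ^ 2) := by
    rw [← Real.exp_add]
    apply Real.exp_le_exp.mpr
    have hpos : 0 ≤ 2 * (s - z) ^ 2 + 2 - (s₀ - z) ^ 2 := by nlinarith
    have heq : 1 / (4 * t) + -(1 / (8 * t)) * (s₀ - z) ^ 2 - (-(s - z) ^ 2 / (4 * t)) =
        1 / (8 * t) * (2 * (s - z) ^ 2 + 2 - (s₀ - z) ^ 2) := by
      field_simp
      ring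
    nlinarith [mul_nonneg (by positivity : (0:ℝ) ≤ 1 / (8 * t)) hpos]
  have h5t : (0:ℝ) ≤ 5 * t ^ ((1:ℝ) / 2) := by positivity
  unfold g
  calc |s - z| / t * (1 / Real.sqrt (2 * Real.pi * t) * Real.exp (-(s - z) ^ 2 / (2 * t)))
      = 1 / t * (1 / Real.sqrt (2 * Real.pi * t)) *
          (|s - z| * Real.exp (-(s - z) ^ 2 / (2 * t))) := by ring
    _ ≤ 1 / t * (1 / Real.sqrt (2 * Real.pi * t)) *
          (5 * t ^ ((1:ℝ) / 2) * Real.exp (-(s - z) ^ 2 / (4 * t))) := by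
        apply mul_le_mul_of_nonneg_left _ (by positivity)
        simpa [show ((1:ℝ)/2) = 1/2 by norm_num] using hkey
    _ ≤ 1 / t * (1 / Real.sqrt (2 * Real.pi * t)) *
          (5 * t ^ ((1:ℝ) / 2) *
            (Real.exp (1 / (4 * t)) * Real.exp (-(1 / (8 * t)) * (s₀ - z) ^ 2))) := by
        apply mul_le_mul_of_nonneg_left _ (by positivity)
        exact mul_le_mul_of_nonneg_left hexp h5t
    _ = 1 / t * (5 * t ^ ((1:ℝ) / 2)) * (1 / Real.sqrt (2 * Real.pi * t)) *
          Real.exp (1 / (4 * t)) * Real.exp (-(1 / (8 * t)) * (s₀ - z) ^ 2) := by ring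

section Deriv

variable {E : Type*} [NormedAddCommGroup E] [NormedSpace ℝ E] [CompleteSpace E]

set_option maxHeartbeats 2000000 in
lemma hasDerivAt_Phi {t : ℝ} (ht : 0 < t) {u : ℝ → E} (hu : Continuous u)
    {M : ℝ} (hM : ∀ z, ‖u z‖ ≤ M) (v₀ : E) (hv₀ : ‖v₀‖ ≤ M) (s₀ : ℝ) :
    Integrable (fun z => (-((s₀ - z) / t) * g t (s₀ - z)) • (u z - v₀)) ∧
    HasDerivAt (fun s => ∫ z, g t (s - z) • (u z - v₀))
      (∫ z, (-((s₀ - z) / t) * g t (s₀ - z)) • (u z - v₀)) s₀ := by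
  have hub : ∀ z, ‖u z - v₀‖ ≤ M + M := fun z =>
    (norm_sub_le _ _).trans (add_le_add (hM z) hv₀)
  have hcv : Continuous (fun z => u z - v₀) := hu.sub continuous_const
  refine hasDerivAt_integral_of_dominated_loc_of_deriv_le (𝕜 := ℝ)
    (F := fun s z => g t (s - z) • (u z - v₀))
    (F' := fun s z => (-((s - z) / t) * g t (s - z)) • (u z - v₀))
    (bound := fun z => 1 / t * (5 * t ^ ((1:ℝ) / 2)) * (1 / Real.sqrt (2 * Real.pi * t)) *
        Real.exp (1 / (4 * t)) * Real.exp (-(1 / (8 * t)) * (s₀ - z) ^ 2) * (M + M))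
    (Metric.ball_mem_nhds s₀ one_pos) ?_ ?_ ?_ ?_ ?_ ?_
  · exact Filter.Eventually.of_forall fun s =>
      ((continuous_g_sub s).smul hcv).aestronglyMeasurable
  · exact integrable_smul_of_bounded (integrable_g_sub ht s₀) (continuous_g_sub s₀) hcv hub
  · refine Continuous.aestronglyMeasurable ?_
    refine Continuous.smul ?_ hcv
    have : Continuous fun z : ℝ => -((s₀ - z) / t) := by fun_prop
    exact this.mul (continuous_g_sub s₀)
  · refine Filter.Eventually.of_forall fun z => fun s hs => ?_
    rw [norm_smul, Real.norm_eq_abs, abs_mul, abs_neg, abs_div, abs_of_pos ht,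
      abs_of_nonneg (g_nonneg _ _)]
    have hball : |s - s₀| < 1 := by
      rw [Metric.mem_ball, Real.dist_eq] at hs; exact hs
    have h1 := deriv_kernel_bound ht s₀ s z hball
    have h2 : (0:ℝ) ≤ 1 / t * (5 * t ^ ((1:ℝ) / 2)) * (1 / Real.sqrt (2 * Real.pi * t)) *
        Real.exp (1 / (4 * t)) * Real.exp (-(1 / (8 * t)) * (s₀ - z) ^ 2) := by positivity
    have h3 : 0 ≤ |s - z| / t * g t (s - z) := by
      apply mul_nonneg (by positivity) (g_nonneg _ _)
    calc |s - z| / t * g t (s - z) * ‖u z - v₀‖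
        ≤ |s - z| / t * g t (s - z) * (M + M) := by
          apply mul_le_mul_of_nonneg_left (hub z) h3
      _ ≤ _ := by
          apply mul_le_mul_of_nonneg_right h1
          have := norm_nonneg (u 0 - v₀)
          linarith [hub 0, norm_nonneg (u 0 - v₀)]
  · have hbase : Integrable (fun z : ℝ => Real.exp (-(1 / (8 * t)) * (z - s₀) ^ 2)) :=
      (integrable_exp_neg_mul_sq (b := 1 / (8 * t)) (by positivity)).comp_sub_right s₀
    have hbase' : Integrable (fun z : ℝ => Real.exp (-(1 / (8 * t)) * (s₀ - z) ^ 2)) := by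
      refine hbase.congr (Filter.Eventually.of_forall fun z => ?_)
      simp only
      rw [show (z - s₀) ^ 2 = (s₀ - z) ^ 2 by ring]
    exact (hbase'.const_mul _).mul_const _
  · refine Filter.Eventually.of_forall fun z => fun s _ => ?_
    exact (hasDerivAt_g ht z s).smul_const (u z - v₀)

end Deriv


section Est

variable {E : Type*} [NormedAddCommGroup E] [NormedSpace ℝ E] [CompleteSpace E]

lemma norm_Phi'_le {t : ℝ} (ht : 0 < t) {β : ℝ} (hβ0 : 0 < β) (hβ1 : β ≤ 1)
    {u : ℝ → E} (hu : Continuous u) {M H : ℝ} (hM : ∀ z, ‖u z‖ ≤ M) (hH : 0 ≤ H)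
    (hHol : ∀ a b, ‖u a - u b‖ ≤ H * |a - b| ^ β)
    (x s : ℝ) (hs : |s - x| ≤ t ^ ((1:ℝ) / 2)) :
    ‖∫ z, (-((s - z) / t) * g t (s - z)) • (u z - u x)‖ ≤
      20 * H * t ^ ((β - 1) / 2) := by
  have h1β : (0:ℝ) < 1 + β := by linarith
  have hHt : 0 ≤ H / t := by positivity
  set φ : ℝ → ℝ := fun z => H / t * (|s - z| ^ ((1:ℝ) + β) * g t (s - z)) +
      H / t * t ^ (β / 2) * (|s - z| ^ ((1:ℝ)) * g t (s - z)) with hφdef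
  have hint1 : Integrable (fun z => |s - z| ^ ((1:ℝ) + β) * g t (s - z)) :=
    (integrable_comp_sub_left (fun w => |w| ^ ((1:ℝ) + β) * g t w) s).mpr
      (integrable_moment ht (by linarith) (by linarith))
  have hint2 : Integrable (fun z => |s - z| ^ ((1:ℝ)) * g t (s - z)) :=
    (integrable_comp_sub_left (fun w => |w| ^ ((1:ℝ)) * g t w) s).mpr
      (integrable_moment ht (by norm_num) (by norm_num))
  have hφint : Integrable φ := ((hint1.const_mul _).add (hint2.const_mul _))
  have hsx : |s - x| ^ β ≤ t ^ (β / 2) := by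
    calc |s - x| ^ β ≤ (t ^ ((1:ℝ) / 2)) ^ β :=
          Real.rpow_le_rpow (abs_nonneg _) hs hβ0.le
      _ = t ^ (β / 2) := by
          rw [← Real.rpow_mul ht.le]
          congr 1
          ring
  have hptwise : ∀ z, ‖(-((s - z) / t) * g t (s - z)) • (u z - u x)‖ ≤ φ z := by
    intro z
    rw [norm_smul, Real.norm_eq_abs, abs_mul, abs_neg, abs_div, abs_of_pos ht,
      abs_of_nonneg (g_nonneg _ _)]
    have hzx : |z - x| ^ β ≤ |s - z| ^ β + t ^ (β / 2) := by
      calc |z - x| ^ β ≤ (|z - s| + |s - x|) ^ β :=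
            Real.rpow_le_rpow (abs_nonneg _) (abs_sub_le z s x) hβ0.le
        _ ≤ |z - s| ^ β + |s - x| ^ β :=
            rpow_add_le_add_rpow' (abs_nonneg _) (abs_nonneg _) hβ0.le hβ1
        _ ≤ |s - z| ^ β + t ^ (β / 2) := by
            rw [abs_sub_comm z s]
            exact add_le_add_right hsx _
    have hg0 : 0 ≤ g t (s - z) := g_nonneg _ _
    have h3 : 0 ≤ |s - z| / t * g t (s - z) := mul_nonneg (by positivity) hg0
    have hsplit : |s - z| ^ ((1:ℝ) + β) = |s - z| * |s - z| ^ β := by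
      rw [Real.rpow_add' (abs_nonneg _) (ne_of_gt h1β), Real.rpow_one]
    calc |s - z| / t * g t (s - z) * ‖u z - u x‖
        ≤ |s - z| / t * g t (s - z) * (H * |z - x| ^ β) := by
          apply mul_le_mul_of_nonneg_left (hHol z x) h3
      _ ≤ |s - z| / t * g t (s - z) * (H * (|s - z| ^ β + t ^ (β / 2))) := by
          apply mul_le_mul_of_nonneg_left _ h3
          exact mul_le_mul_of_nonneg_left hzx hH
      _ = φ z := by
          rw [hφdef]
          simp only
          rw [hsplit, Real.rpow_one]
          field_simp
  have hnorm := MeasureTheory.norm_integral_le_of_norm_le hφint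
    (Filter.Eventually.of_forall hptwise)
  refine hnorm.trans ?_
  have hI1 : (∫ z, |s - z| ^ ((1:ℝ) + β) * g t (s - z)) ≤ 10 * t ^ (((1:ℝ) + β) / 2) := by
    have heq := MeasureTheory.integral_sub_left_eq_self
      (fun w => |w| ^ ((1:ℝ) + β) * g t w) volume s
    rw [heq]
    exact moment_le ht (by linarith) (by linarith)
  have hI2 : (∫ z, |s - z| ^ ((1:ℝ)) * g t (s - z)) ≤ 10 * t ^ ((1:ℝ) / 2) := by
    have heq := MeasureTheory.integral_sub_left_eq_self
      (fun w => |w| ^ ((1:ℝ)) * g t w) volume s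
    rw [heq]
    exact moment_le ht (by norm_num) (by norm_num)
  have hI1' : 0 ≤ (∫ z, |s - z| ^ ((1:ℝ)) * g t (s - z)) :=
    integral_nonneg fun z => mul_nonneg (Real.rpow_nonneg (abs_nonneg _) _) (g_nonneg _ _)
  have e1 : t ^ (((1:ℝ) + β) / 2) / t = t ^ ((β - 1) / 2) := by
    rw [show ((β - 1) / 2 : ℝ) = ((1:ℝ) + β) / 2 - 1 by ring, Real.rpow_sub ht, Real.rpow_one]
  have e2 : t ^ (β / 2) * t ^ ((1:ℝ) / 2) = t ^ (((1:ℝ) + β) / 2) := by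
    rw [← Real.rpow_add ht]
    congr 1
    ring
  have htb : (0:ℝ) ≤ t ^ (β / 2) := Real.rpow_nonneg ht.le _
  calc (∫ z, φ z)
      = H / t * (∫ z, |s - z| ^ ((1:ℝ) + β) * g t (s - z)) +
        H / t * t ^ (β / 2) * (∫ z, |s - z| ^ ((1:ℝ)) * g t (s - z)) := by
        rw [hφdef]
        simp only
        rw [MeasureTheory.integral_add (hint1.const_mul _) (hint2.const_mul _),
          integral_const_mul, integral_const_mul]
    _ ≤ H / t * (10 * t ^ (((1:ℝ) + β) / 2)) + H / t * t ^ (β / 2) * (10 * t ^ ((1:ℝ) / 2)) := by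
        have := mul_le_mul_of_nonneg_left hI1 hHt
        have := mul_le_mul_of_nonneg_left hI2 (mul_nonneg hHt htb)
        gcongr
    _ = 10 * H * (t ^ (((1:ℝ) + β) / 2) / t) + 10 * H * (t ^ (β / 2) * t ^ ((1:ℝ) / 2) / t) := by
        ring
    _ = 20 * H * t ^ ((β - 1) / 2) := by
        rw [e2, e1]
        ring

lemma T_eq_Phi_add {t : ℝ} (ht : 0 < t) {u : ℝ → E} (hu : Continuous u)
    {M : ℝ} (hM : ∀ z, ‖u z‖ ≤ M) (v₀ : E) (hv₀ : ‖v₀‖ ≤ M) (s : ℝ) :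
    (∫ z, g t (s - z) • u z) = (∫ z, g t (s - z) • (u z - v₀)) + v₀ := by
  have hub : ∀ z, ‖u z - v₀‖ ≤ M + M := fun z =>
    (norm_sub_le _ _).trans (add_le_add (hM z) hv₀)
  have hint1 : Integrable (fun z => g t (s - z) • (u z - v₀)) :=
    integrable_smul_of_bounded (integrable_g_sub ht s) (continuous_g_sub s)
      (hu.sub continuous_const) hub
  have hint2 : Integrable (fun z => g t (s - z) • v₀) :=
    (integrable_g_sub ht s).smul_const v₀
  have hnorm : (∫ z, g t (s - z)) = 1 := by
    rw [MeasureTheory.integral_sub_left_eq_self (g t) volume s]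
    exact integral_g ht
  calc (∫ z, g t (s - z) • u z)
      = ∫ z, (g t (s - z) • (u z - v₀) + g t (s - z) • v₀) := by
        refine integral_congr_ae (Filter.Eventually.of_forall fun z => ?_)
        simp only
        rw [← smul_add, sub_add_cancel]
    _ = (∫ z, g t (s - z) • (u z - v₀)) + ∫ z, g t (s - z) • v₀ :=
        MeasureTheory.integral_add hint1 hint2
    _ = (∫ z, g t (s - z) • (u z - v₀)) + v₀ := by
        rw [integral_smul_const, hnorm, one_smul]

/-- Smoothing estimate for `|x - y| ≤ √t`. -/
lemma T_sub_le_small {t : ℝ} (ht : 0 < t) {β : ℝ} (hβ0 : 0 < β) (hβ1 : β ≤ 1)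
    {u : ℝ → E} (hu : Continuous u) {M H : ℝ} (hM : ∀ z, ‖u z‖ ≤ M) (hH : 0 ≤ H)
    (hHol : ∀ a b, ‖u a - u b‖ ≤ H * |a - b| ^ β)
    (x y : ℝ) (hxy : |x - y| ≤ t ^ ((1:ℝ) / 2)) :
    ‖(∫ z, g t (x - z) • u z) - ∫ z, g t (y - z) • u z‖ ≤
      20 * H * t ^ ((β - 1) / 2) * |x - y| := by
  set Φ : ℝ → E := fun s => ∫ z, g t (s - z) • (u z - u x) with hΦdef
  have hdiff : ((∫ z, g t (x - z) • u z) - ∫ z, g t (y - z) • u z) = Φ x - Φ y := by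
    rw [T_eq_Phi_add ht hu hM (u x) (hM x) x, T_eq_Phi_add ht hu hM (u x) (hM x) y]
    abel
  rw [hdiff]
  have hC0 : 0 ≤ 20 * H * t ^ ((β - 1) / 2) := by positivity
  have key : ∀ a b : ℝ, a ≤ b → b - a ≤ t ^ ((1:ℝ) / 2) →
      (x = a ∧ y = b ∨ x = b ∧ y = a) →
      ‖Φ b - Φ a‖ ≤ 20 * H * t ^ ((β - 1) / 2) * (b - a) := by
    intro a b hab hba hxy'
    have hd : ∀ s ∈ Set.Icc a b, HasDerivWithinAt Φ
        (∫ z, (-((s - z) / t) * g t (s - z)) • (u z - u x)) (Set.Icc a b) s := by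
      intro s _
      exact ((hasDerivAt_Phi ht hu hM (u x) (hM x) s).2).hasDerivWithinAt
    have hb : ∀ s ∈ Set.Ico a b,
        ‖∫ z, (-((s - z) / t) * g t (s - z)) • (u z - u x)‖ ≤
          20 * H * t ^ ((β - 1) / 2) := by
      intro s hsmem
      refine norm_Phi'_le ht hβ0 hβ1 hu hM hH hHol x s ?_
      have hxab : x ∈ Set.Icc a b := by
        rcases hxy' with ⟨hx, _⟩ | ⟨hx, _⟩
        · rw [hx]; exact Set.left_mem_Icc.mpr hab
        · rw [hx]; exact Set.right_mem_Icc.mpr hab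
      have hsab : s ∈ Set.Icc a b := Set.Ico_subset_Icc_self hsmem
      have : |s - x| ≤ b - a := by
        rw [abs_le]
        constructor <;> [linarith [hsab.1, hsab.2, hxab.1, hxab.2];
          linarith [hsab.1, hsab.2, hxab.1, hxab.2]]
      linarith
    exact norm_image_sub_le_of_norm_deriv_le_segment' hd hb b (Set.right_mem_Icc.mpr hab)
  rcases le_total x y with h | h
  · have habs : |x - y| = y - x := by rw [abs_sub_comm]; exact abs_of_nonneg (by linarith)
    have := key x y h (by rw [← habs]; exact hxy) (Or.inl ⟨rfl, rfl⟩)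
    rw [norm_sub_rev, habs]
    exact this
  · have habs : |x - y| = x - y := abs_of_nonneg (by linarith)
    have := key y x h (by rw [← habs]; exact hxy) (Or.inr ⟨rfl, rfl⟩)
    rw [habs]
    exact this

/-- Contraction estimate. -/
lemma T_sub_le_contraction {t : ℝ} (ht : 0 < t) {β : ℝ}
    {u : ℝ → E} (hu : Continuous u) {M H : ℝ} (hM : ∀ z, ‖u z‖ ≤ M)
    (hHol : ∀ a b, ‖u a - u b‖ ≤ H * |a - b| ^ β) (x y : ℝ) :
    ‖(∫ z, g t (x - z) • u z) - ∫ z, g t (y - z) • u z‖ ≤ H * |x - y| ^ β := by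
  have hrep : ∀ s : ℝ, (∫ z, g t (s - z) • u z) = ∫ w, g t w • u (s - w) := by
    intro s
    have h := MeasureTheory.integral_sub_left_eq_self (fun w => g t w • u (s - w)) volume s
    simp only [sub_sub_cancel] at h
    exact h
  have hcomp : ∀ s : ℝ, Integrable (fun w => g t w • u (s - w)) := fun s =>
    integrable_smul_of_bounded (integrable_g ht) (continuous_g t)
      (hu.comp (continuous_const.sub continuous_id)) (fun w => hM _)
  rw [hrep x, hrep y, ← MeasureTheory.integral_sub (hcomp x) (hcomp y)]
  have hptwise : ∀ w, ‖g t w • u (x - w) - g t w • u (y - w)‖ ≤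
      g t w * (H * |x - y| ^ β) := by
    intro w
    rw [← smul_sub, norm_smul, Real.norm_eq_abs, abs_of_nonneg (g_nonneg _ _)]
    apply mul_le_mul_of_nonneg_left _ (g_nonneg _ _)
    have := hHol (x - w) (y - w)
    rwa [show x - w - (y - w) = x - y by ring] at this
  refine (MeasureTheory.norm_integral_le_of_norm_le ((integrable_g ht).mul_const _)
    (Filter.Eventually.of_forall hptwise)).trans ?_
  rw [integral_mul_const, integral_g ht, one_mul]

end Est


end HS7

open HS7 in
/-- Smoothing estimate for the periodic heat semigroup. -/
theorem heatSemigroup_holder_smoothing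
    (β γ : ℝ) (hβ0 : 0 < β) (hβγ : β ≤ γ) (hγ1 : γ ≤ 1) :
    ∃ C : ℝ, ∀ t ∈ Set.Ioc (0 : ℝ) 1, ∀ d : ℕ, 1 ≤ d →
      ∀ u₀ : ℝ → EuclideanSpace ℝ (Fin d), Continuous u₀ →
        BddAbove (Set.range fun y : ℝ => ‖u₀ y‖) →
        (∀ y, u₀ (y + 2 * Real.pi) = u₀ y) →
        BddAbove (Set.range fun p : {q : ℝ × ℝ // q.1 ≠ q.2} =>
          ‖u₀ p.1.1 - u₀ p.1.2‖ / |p.1.1 - p.1.2| ^ β) →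
        ∀ x y : ℝ, x ≠ y →
          ‖heatSemigroup t u₀ x - heatSemigroup t u₀ y‖ / |x - y| ^ γ
            ≤ C * t ^ (-(γ - β) / 2) * ((⨆ z : ℝ, ‖u₀ z‖) + holderR β u₀) := by
  have hβ1 : β ≤ 1 := hβγ.trans hγ1
  refine ⟨20, fun t htmem d _hd u hu hbdd hper hbddH x y hxy => ?_⟩
  obtain ⟨ht, _ht1⟩ := htmem
  set M : ℝ := ⨆ z : ℝ, ‖u z‖ with hMdef
  set H : ℝ := holderR β u with hHdef
  have hM : ∀ z, ‖u z‖ ≤ M := fun z => le_ciSup hbdd z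
  have hM0 : 0 ≤ M := (norm_nonneg (u 0)).trans (hM 0)
  have hH0 : 0 ≤ H :=
    Real.iSup_nonneg fun p => div_nonneg (norm_nonneg _) (Real.rpow_nonneg (abs_nonneg _) _)
  have hHol : ∀ a b : ℝ, ‖u a - u b‖ ≤ H * |a - b| ^ β := by
    intro a b
    rcases eq_or_ne a b with rfl | hab
    · simp [sub_self, Real.zero_rpow hβ0.ne']
    · have hmem : ‖u a - u b‖ / |a - b| ^ β ≤ H :=
        le_ciSup hbddH (⟨(a, b), hab⟩ : {q : ℝ × ℝ // q.1 ≠ q.2})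
      have hpos : 0 < |a - b| ^ β :=
        Real.rpow_pos_of_pos (abs_pos.mpr (sub_ne_zero.mpr hab)) β
      rw [div_le_iff₀ hpos] at hmem
      linarith [hmem]
  rw [heatSemigroup_eq ht hu hM hper x, heatSemigroup_eq ht hu hM hper y]
  have hpos : 0 < |x - y| := abs_pos.mpr (sub_ne_zero.mpr hxy)
  have hγpos : 0 < |x - y| ^ γ := Real.rpow_pos_of_pos hpos γ
  have hexp : t ^ (-(γ - β) / 2) = t ^ ((β - γ) / 2) := by congr 1; ring
  have htc : (0:ℝ) < t ^ ((β - γ) / 2) := Real.rpow_pos_of_pos ht _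
  have hsqrt : (0:ℝ) < t ^ ((1:ℝ) / 2) := Real.rpow_pos_of_pos ht _
  rw [div_le_iff₀ hγpos, hexp]
  rcases le_total (t ^ ((1:ℝ) / 2)) (|x - y|) with hcase | hcase
  · -- large increments: contraction estimate
    refine (T_sub_le_contraction ht hu hM hHol x y).trans ?_
    have hsplit : |x - y| ^ (β - γ) * |x - y| ^ γ = |x - y| ^ β := by
      rw [← Real.rpow_add hpos]; congr 1; ring
    have h2 : |x - y| ^ (β - γ) ≤ t ^ ((β - γ) / 2) := by
      have h3 : (t ^ ((1:ℝ) / 2)) ^ (β - γ) = t ^ ((β - γ) / 2) := by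
        rw [← Real.rpow_mul ht.le]; congr 1; ring
      rcases eq_or_lt_of_le hβγ with heq | hlt
      · subst heq
        rw [sub_self]
        norm_num
      · rw [← h3]
        exact Real.rpow_le_rpow_of_nonpos hsqrt hcase (by linarith)
    calc H * |x - y| ^ β = H * |x - y| ^ (β - γ) * |x - y| ^ γ := by
          rw [mul_assoc, hsplit]
      _ ≤ H * t ^ ((β - γ) / 2) * |x - y| ^ γ := by
          apply mul_le_mul_of_nonneg_right _ hγpos.le
          exact mul_le_mul_of_nonneg_left h2 hH0
      _ ≤ 20 * t ^ ((β - γ) / 2) * (M + H) * |x - y| ^ γ := by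
          apply mul_le_mul_of_nonneg_right _ hγpos.le
          nlinarith [htc.le, hH0, hM0, mul_nonneg htc.le (by linarith : (0:ℝ) ≤ 20 * M + 19 * H)]
  · -- small increments: gradient estimate
    refine (T_sub_le_small ht hβ0 hβ1 hu hM hH0 hHol x y hcase).trans ?_
    have hsplit : |x - y| ^ (1 - γ) * |x - y| ^ γ = |x - y| := by
      rw [← Real.rpow_add hpos, show (1 - γ) + γ = 1 by ring, Real.rpow_one]
    have h2 : |x - y| ^ (1 - γ) ≤ t ^ ((1 - γ) / 2) := by
      have h3 : (t ^ ((1:ℝ) / 2)) ^ (1 - γ) = t ^ ((1 - γ) / 2) := by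
        rw [← Real.rpow_mul ht.le]; congr 1; ring
      rw [← h3]
      exact Real.rpow_le_rpow (abs_nonneg _) hcase (by linarith)
    have h4 : t ^ ((β - 1) / 2) * t ^ ((1 - γ) / 2) = t ^ ((β - γ) / 2) := by
      rw [← Real.rpow_add ht]; congr 1; ring
    have htb1 : (0:ℝ) ≤ t ^ ((β - 1) / 2) := Real.rpow_nonneg ht.le _
    calc 20 * H * t ^ ((β - 1) / 2) * |x - y|
        = 20 * H * (t ^ ((β - 1) / 2) * |x - y| ^ (1 - γ)) * |x - y| ^ γ := by
          conv_lhs => rw [← hsplit]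
          ring
      _ ≤ 20 * H * (t ^ ((β - 1) / 2) * t ^ ((1 - γ) / 2)) * |x - y| ^ γ := by
          apply mul_le_mul_of_nonneg_right _ hγpos.le
          apply mul_le_mul_of_nonneg_left _ (by positivity)
          exact mul_le_mul_of_nonneg_left h2 htb1
      _ = 20 * H * t ^ ((β - γ) / 2) * |x - y| ^ γ := by rw [h4]
      _ ≤ 20 * t ^ ((β - γ) / 2) * (M + H) * |x - y| ^ γ := by
          apply mul_le_mul_of_nonneg_right _ hγpos.le
          nlinarith [htc.le, hH0, hM0, mul_nonneg htc.le hM0]
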